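/- Let m be a positive integer, let p be a prime with p ≥ m, and let L be a positive integer with p ∤ L. Let q > p be the largest prime dividing L. If there exists a covering system with distinct moduli whose set of moduli is exactly the set of divisors of L that are ≥ m, then there exists a covering system with distinct moduli whose set of moduli is exactly the set of divisors of p^{ν_q(L)} · L / q^{ν_q(L)} that are ≥ m, where ν_q(L) denotes the exponent of the prime q in L. -/

import Mathlib

/-- A covering system: a finite set of arithmetic progressions, each encoded as a pair
`(a, m)` representing `a mod m = {a + k*m : k ∈ ℤ}` with modulus `m ≥ 1`, such that
every integer belongs to at least one of the progressions. -/
def IsCoveringSystem (C : Finset (ℤ × ℕ)) : Prop :=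
  (∀ q ∈ C, 1 ≤ q.2) ∧ ∀ x : ℤ, ∃ q ∈ C, (q.2 : ℤ) ∣ x - q.1

/-- The moduli of the progressions in `C` are pairwise distinct. -/
def HasDistinctModuli (C : Finset (ℤ × ℕ)) : Prop :=
  ∀ q ∈ C, ∀ r ∈ C, q.2 = r.2 → q = r


open Classical in
noncomputable def pickInt (P : ℤ → Prop) : ℤ := if h : ∃ z, P z then h.choose else 0

lemma pickInt_spec {P : ℤ → Prop} (h : ∃ z, P z) : P (pickInt P) := by
  rw [pickInt, dif_pos h]; exact h.choose_spec

lemma crt_exists (n m : ℕ) (h : Nat.Coprime n m) (a b : ℤ) :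
    ∃ z : ℤ, (n : ℤ) ∣ z - a ∧ (m : ℤ) ∣ z - b := by
  obtain ⟨u, v, huv⟩ := Nat.isCoprime_iff_coprime.mpr h
  exact ⟨a * v * m + b * u * n,
    ⟨(b - a) * u, by linear_combination a * huv⟩,
    ⟨(a - b) * v, by linear_combination b * huv⟩⟩

lemma ofDigits_digits_mod (p q : ℕ) (hp : 2 ≤ p) (hpq : p ≤ q) (j n : ℕ) :
    Nat.ofDigits q (Nat.digits p n) % q ^ j = Nat.ofDigits q (Nat.digits p (n % p ^ j)) := by
  induction j generalizing n with
  | zero => simp [Nat.mod_one]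
  | succ j ih =>
    have hq2 : 2 ≤ q := le_trans hp hpq
    rcases Nat.eq_zero_or_pos n with rfl | hn
    · simp
    have hlt : n % p < q := lt_of_lt_of_le (Nat.mod_lt n (by omega)) hpq
    have hsplit : Nat.ofDigits q (Nat.digits p n) = n % p + q * Nat.ofDigits q (Nat.digits p (n / p)) := by
      rw [Nat.digits_def' hp hn, Nat.ofDigits_cons]
    have hmodlt : Nat.ofDigits q (Nat.digits p (n / p)) % q ^ j < q ^ j := Nat.mod_lt _ (by positivity)
    have hL : Nat.ofDigits q (Nat.digits p n) % q ^ (j + 1) = n % p + q * (Nat.ofDigits q (Nat.digits p (n / p)) % q ^ j) := by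
      have h1 : Nat.ofDigits q (Nat.digits p n) = (n % p + q * (Nat.ofDigits q (Nat.digits p (n / p)) % q ^ j)) + q ^ (j + 1) * (Nat.ofDigits q (Nat.digits p (n / p)) / q ^ j) := by
        rw [hsplit, pow_succ]
        conv_lhs => rw [← Nat.mod_add_div (Nat.ofDigits q (Nat.digits p (n / p))) (q ^ j)]
        ring
      rw [h1, Nat.add_mul_mod_self_left]
      apply Nat.mod_eq_of_lt
      have h2 : q * (Nat.ofDigits q (Nat.digits p (n / p)) % q ^ j + 1) ≤ q * q ^ j := Nat.mul_le_mul_left q hmodlt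
      rw [Nat.mul_add, Nat.mul_one] at h2
      calc n % p + q * (Nat.ofDigits q (Nat.digits p (n / p)) % q ^ j) < q + q * (Nat.ofDigits q (Nat.digits p (n / p)) % q ^ j) := by omega
        _ ≤ q * q ^ j := by omega
        _ = q ^ (j + 1) := by ring
    rcases Nat.eq_zero_or_pos (n % p ^ (j + 1)) with hz | hpos
    · have hdvd : p ^ (j + 1) ∣ n := Nat.dvd_of_mod_eq_zero hz
      have hp1 : n % p = 0 := by
        have : p ∣ n := dvd_trans (dvd_pow_self p j.succ_ne_zero) hdvd
        omega
      obtain ⟨k, hk⟩ := hdvd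
      have hnp : n / p = p ^ j * k := by
        rw [hk, pow_succ, mul_comm (p ^ j) p, mul_assoc, Nat.mul_div_cancel_left _ (by omega)]
      have h3 : (n / p) % p ^ j = 0 := by
        rw [hnp]; exact Nat.mul_mod_right _ _
      rw [hL, hz, ih, h3, hp1]
      simp
    · have hR : Nat.ofDigits q (Nat.digits p (n % p ^ (j + 1))) = n % p + q * Nat.ofDigits q (Nat.digits p (n / p % p ^ j)) := by
        rw [Nat.digits_def' hp hpos, Nat.ofDigits_cons,
          Nat.mod_mod_of_dvd _ (dvd_pow_self p j.succ_ne_zero),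
          show p ^ (j + 1) = p * p ^ j by ring, Nat.mod_mul_right_div_self]
      rw [hL, hR, ih]

lemma ofDigits_digits_inv (p q n : ℕ) (hp : 2 ≤ p) (hpq : p < q) :
    Nat.ofDigits p (Nat.digits q (Nat.ofDigits q (Nat.digits p n))) = n := by
  rw [Nat.digits_ofDigits q (by omega) _
    (fun x hx => lt_trans (Nat.digits_lt_base hp hx) hpq)
    (fun hne => Nat.getLast_digit_ne_zero p (Nat.digits_ne_nil_iff_ne_zero.mp hne)),
    Nat.ofDigits_digits]

lemma fact_pow_mul (r : ℕ) (hr : r.Prime) (j d0 : ℕ) (h0 : d0 ≠ 0) (hrd : ¬ r ∣ d0) :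
    (r ^ j * d0).factorization r = j := by
  rw [Nat.factorization_mul (pow_ne_zero j hr.pos.ne') h0]
  simp [hr.factorization_pow, Nat.factorization_eq_zero_of_not_dvd hrd]

lemma dvd_decomp (r : ℕ) (hr : r.Prime) (N M d : ℕ) (hM : M ≠ 0) (hrM : ¬ r ∣ M)
    (hd : d ∣ r ^ N * M) :
    d.factorization r ≤ N ∧ d / r ^ (d.factorization r) ∣ M ∧
      ¬ r ∣ d / r ^ d.factorization r ∧ r ^ d.factorization r * (d / r ^ d.factorization r) = d := by
  have hd0 : d ≠ 0 := ne_zero_of_dvd_ne_zero (mul_ne_zero (pow_ne_zero _ hr.pos.ne') hM) hd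
  refine ⟨?_, ?_, Nat.not_dvd_ordCompl hr hd0, Nat.ordProj_mul_ordCompl_eq_self d r⟩
  · have h1 := (Nat.factorization_le_iff_dvd hd0
      (mul_ne_zero (pow_ne_zero _ hr.pos.ne') hM)).mpr hd
    have h2 := h1 r
    rwa [fact_pow_mul r hr N M hM hrM] at h2
  · have h1 : d / r ^ d.factorization r ∣ r ^ N * M := (Nat.ordCompl_dvd d r).trans hd
    exact ((hr.coprime_iff_not_dvd.mpr (Nat.not_dvd_ordCompl hr hd0)).symm.pow_right
      N).dvd_of_dvd_mul_left h1
theorem replace_largest_prime (m : ℕ) (hm : 1 ≤ m)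
    (p : ℕ) (hp : p.Prime) (hpm : m ≤ p)
    (L : ℕ) (hL : 0 < L) (hpL : ¬ p ∣ L)
    (q : ℕ) (hq : q.Prime) (hpq : p < q) (hqL : q ∣ L)
    (hqmax : ∀ r : ℕ, r.Prime → r ∣ L → r ≤ q)
    (h : ∃ C : Finset (ℤ × ℕ), IsCoveringSystem C ∧ HasDistinctModuli C ∧
      C.image Prod.snd = L.divisors.filter (fun d => m ≤ d)) :
    ∃ C : Finset (ℤ × ℕ), IsCoveringSystem C ∧ HasDistinctModuli C ∧
      C.image Prod.snd =
        (p ^ (L.factorization q) * L / q ^ (L.factorization q)).divisors.filter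
          (fun d => m ≤ d) := by
  obtain ⟨C, ⟨hCpos, hCcov⟩, hCdist, hCmod⟩ := h
  have hp2 : 2 ≤ p := hp.two_le
  have hq2 : 2 ≤ q := hq.two_le
  have hL0 : L ≠ 0 := hL.ne'
  set e := L.factorization q with he
  set M := L / q ^ e with hM
  have hLe : q ^ e * M = L := Nat.ordProj_mul_ordCompl_eq_self L q
  have hqM : ¬ q ∣ M := Nat.not_dvd_ordCompl hq hL0
  have hM0 : M ≠ 0 := by
    intro h0
    rw [h0, mul_zero] at hLe
    exact hL0 hLe.symm
  have hpM : ¬ p ∣ M := fun hd => hpL (hd.trans (Nat.ordCompl_dvd L q))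
  have hL' : p ^ e * L / q ^ e = p ^ e * M := by
    rw [hM, Nat.mul_div_assoc _ (Nat.ordProj_dvd L q)]
  -- membership facts
  have hmem : ∀ b ∈ C, b.2 ∣ L ∧ m ≤ b.2 := by
    intro b hb
    have h1 : b.2 ∈ C.image Prod.snd := Finset.mem_image_of_mem _ hb
    rw [hCmod, Finset.mem_filter, Nat.mem_divisors] at h1
    exact ⟨h1.1.1, h1.2⟩
  set φ : ℕ → ℕ := fun d => p ^ d.factorization q * (d / q ^ d.factorization q) with hφ
  -- basic decomposition facts for divisors of L
  have hdecL : ∀ d, d ∣ L → d.factorization q ≤ e ∧ d / q ^ d.factorization q ∣ M ∧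
      ¬ q ∣ d / q ^ d.factorization q ∧ q ^ d.factorization q * (d / q ^ d.factorization q) = d ∧
      ¬ p ∣ d / q ^ d.factorization q ∧ d / q ^ d.factorization q ≠ 0 := by
    intro d hd
    obtain ⟨h1, h2, h3, h4⟩ := dvd_decomp q hq e M d hM0 hqM (by rwa [hLe])
    have hd0 : d ≠ 0 := ne_zero_of_dvd_ne_zero hL0 hd
    refine ⟨h1, h2, h3, h4, fun hpd => hpL (hpd.trans ((Nat.ordCompl_dvd d q).trans hd)), ?_⟩
    intro h0
    rw [h0, mul_zero] at h4
    exact hd0 h4.symm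
  have hforward : ∀ d, d ∣ L → m ≤ d → φ d ∣ p ^ e * M ∧ m ≤ φ d := by
    intro d hd hmd
    obtain ⟨h1, h2, h3, h4, h5, h6⟩ := hdecL d hd
    constructor
    · exact mul_dvd_mul (pow_dvd_pow p h1) h2
    · rcases Nat.eq_zero_or_pos (d.factorization q) with hj | hj
      · have : φ d = d := by
          rw [hφ]; simp only []
          rw [hj, pow_zero, pow_zero, one_mul, Nat.div_one]
        omega
      · have hple : p ≤ p ^ d.factorization q := Nat.le_self_pow hj.ne' p
        have : p ^ d.factorization q ≤ φ d := Nat.le_mul_of_pos_right _ (Nat.pos_of_ne_zero h6)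
        omega
  have hinj : ∀ d1, d1 ∣ L → ∀ d2, d2 ∣ L → φ d1 = φ d2 → d1 = d2 := by
    intro d1 hd1 d2 hd2 heq
    obtain ⟨h11, h12, h13, h14, h15, h16⟩ := hdecL d1 hd1
    obtain ⟨h21, h22, h23, h24, h25, h26⟩ := hdecL d2 hd2
    set j1 := d1.factorization q with hjd1
    set j2 := d2.factorization q with hjd2
    set a := d1 / q ^ j1 with ha
    set b := d2 / q ^ j2 with hbd
    have heq' : p ^ j1 * a = p ^ j2 * b := heq
    have hj : j1 = j2 := by
      rw [← fact_pow_mul p hp j1 a h16 h15, ← fact_pow_mul p hp j2 b h26 h25, heq']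
    rw [hj] at heq'
    have hab : a = b := Nat.eq_of_mul_eq_mul_left (pow_pos hp.pos _) heq'
    rw [← h14, ← h24, hj, hab]
  have hsurj : ∀ d', d' ∣ p ^ e * M → m ≤ d' → ∃ d, d ∣ L ∧ m ≤ d ∧ φ d = d' := by
    intro d' hd' hmd'
    obtain ⟨h1, h2, h3, h4⟩ := dvd_decomp p hp e M d' hM0 hpM hd'
    set j' := d'.factorization p with hj'
    set d0' := d' / p ^ j' with hd0'
    have hd0'0 : d0' ≠ 0 := by
      intro h0
      rw [h0, mul_zero] at h4
      exact (ne_zero_of_dvd_ne_zero (mul_ne_zero (pow_ne_zero _ hp.pos.ne') hM0) hd') h4.symm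
    have hqd0' : ¬ q ∣ d0' := fun hqd => hqM (hqd.trans h2)
    refine ⟨q ^ j' * d0', ?_, ?_, ?_⟩
    · rw [← hLe]; exact mul_dvd_mul (pow_dvd_pow q h1) h2
    · rcases Nat.eq_zero_or_pos j' with hj0 | hj0
      · rw [hj0, pow_zero, one_mul]
        rw [hj0, pow_zero, one_mul] at h4
        omega
      · have hqle : q ≤ q ^ j' := Nat.le_self_pow hj0.ne' q
        have : q ^ j' ≤ q ^ j' * d0' := Nat.le_mul_of_pos_right _ (Nat.pos_of_ne_zero hd0'0)
        omega
    · have hfq : (q ^ j' * d0').factorization q = j' := fact_pow_mul q hq _ _ hd0'0 hqd0'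
      rw [hφ]; simp only []
      rw [hfq, Nat.mul_div_cancel_left _ (pow_pos hq.pos j'), h4]
  -- the transformation
  set F : ℤ × ℕ → ℤ × ℕ := fun c =>
    (pickInt (fun z =>
        ((p ^ c.2.factorization q : ℕ) : ℤ) ∣
          z - ((Nat.ofDigits p (Nat.digits q (c.1 % ((q ^ c.2.factorization q : ℕ) : ℤ)).toNat) : ℕ) : ℤ) ∧
        ((c.2 / q ^ c.2.factorization q : ℕ) : ℤ) ∣ z - c.1),
      φ c.2) with hF
  have hFsnd : ∀ c, (F c).2 = φ c.2 := fun c => rfl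
  have hFspec : ∀ b ∈ C,
      ((p ^ b.2.factorization q : ℕ) : ℤ) ∣
        (F b).1 - ((Nat.ofDigits p (Nat.digits q (b.1 % ((q ^ b.2.factorization q : ℕ) : ℤ)).toNat) : ℕ) : ℤ) ∧
      ((b.2 / q ^ b.2.factorization q : ℕ) : ℤ) ∣ (F b).1 - b.1 := by
    intro b hb
    obtain ⟨hbL, hbm⟩ := hmem b hb
    obtain ⟨h1, h2, h3, h4, h5, h6⟩ := hdecL b.2 hbL
    exact pickInt_spec (crt_exists _ _ ((hp.coprime_iff_not_dvd.mpr h5).pow_left _) _ _)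
  refine ⟨C.image F, ⟨?_, ?_⟩, ?_, ?_⟩
  · -- moduli positive
    intro c hc
    rw [Finset.mem_image] at hc
    obtain ⟨b, hb, rfl⟩ := hc
    obtain ⟨hbL, hbm⟩ := hmem b hb
    have := (hforward b.2 hbL hbm).2
    rw [hFsnd]
    omega
  · -- covering
    intro x
    set x1 : ℕ := (x % ((p ^ e : ℕ) : ℤ)).toNat with hx1def
    have hpe0 : (0 : ℤ) < ((p ^ e : ℕ) : ℤ) := by positivity
    have hx1 : (x1 : ℤ) = x % ((p ^ e : ℕ) : ℤ) :=
      Int.toNat_of_nonneg (Int.emod_nonneg x hpe0.ne')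
    have hxx1 : ((p ^ e : ℕ) : ℤ) ∣ x - (x1 : ℤ) := by
      rw [hx1, Int.emod_def]
      exact ⟨x / ((p ^ e : ℕ) : ℤ), by ring⟩
    obtain ⟨y, hy1, hy2⟩ := crt_exists (q ^ e) M
      ((hq.coprime_iff_not_dvd.mpr hqM).pow_left e)
      ((Nat.ofDigits q (Nat.digits p x1) : ℕ) : ℤ) x
    obtain ⟨b, hb, hcov⟩ := hCcov y
    obtain ⟨hbL, hbm⟩ := hmem b hb
    obtain ⟨h1, h2, h3, h4, h5, h6⟩ := hdecL b.2 hbL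
    set j := b.2.factorization q with hj
    set d0 := b.2 / q ^ j with hd0
    obtain ⟨hFp, hFd0⟩ := hFspec b hb
    -- q^j and d0 divide y - b.1
    have hqjb : ((q ^ j : ℕ) : ℤ) ∣ y - b.1 :=
      (Int.natCast_dvd_natCast.mpr ⟨d0, h4.symm⟩).trans hcov
    have hd0b : ((d0 : ℕ) : ℤ) ∣ y - b.1 :=
      (Int.natCast_dvd_natCast.mpr ⟨q ^ j, by rw [← h4]; ring⟩).trans hcov
    -- Step A : d0 divides x - (F b).1
    have hd0x : ((d0 : ℕ) : ℤ) ∣ x - (F b).1 := by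
      have hA1 : ((d0 : ℕ) : ℤ) ∣ y - x := (Int.natCast_dvd_natCast.mpr h2).trans hy2
      have hA2 : ((d0 : ℕ) : ℤ) ∣ x - b.1 := by
        have := dvd_sub hd0b hA1
        simpa using this
      have := dvd_sub hA2 hFd0
      simpa using this
    -- Step B : p^j divides x - (F b).1
    have hpjx : ((p ^ j : ℕ) : ℤ) ∣ x - (F b).1 := by
      have hqjy : ((q ^ j : ℕ) : ℤ) ∣ y - ((Nat.ofDigits q (Nat.digits p x1) : ℕ) : ℤ) :=
        (Int.natCast_dvd_natCast.mpr (pow_dvd_pow q h1)).trans hy1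
      have hqjsb : ((q ^ j : ℕ) : ℤ) ∣ ((Nat.ofDigits q (Nat.digits p x1) : ℕ) : ℤ) - b.1 := by
        have := dvd_sub hqjb hqjy
        simpa using this
      have hmodeq : b.1 % ((q ^ j : ℕ) : ℤ) =
          ((Nat.ofDigits q (Nat.digits p x1) % q ^ j : ℕ) : ℤ) := by
        have hme : b.1 ≡ ((Nat.ofDigits q (Nat.digits p x1) : ℕ) : ℤ) [ZMOD ((q ^ j : ℕ) : ℤ)] :=
          Int.modEq_iff_dvd.mpr hqjsb
        rw [Int.ModEq] at hme
        rw [hme]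
        push_cast
        ring
      have hπ : ((Nat.ofDigits p (Nat.digits q (b.1 % ((q ^ j : ℕ) : ℤ)).toNat) : ℕ) : ℤ) =
          ((x1 % p ^ j : ℕ) : ℤ) := by
        rw [hmodeq, Int.toNat_natCast,
          ofDigits_digits_mod p q hp2 (le_of_lt hpq) j x1,
          ofDigits_digits_inv p q (x1 % p ^ j) hp2 hpq]
      have hB1 : ((p ^ j : ℕ) : ℤ) ∣ (F b).1 - ((x1 % p ^ j : ℕ) : ℤ) := by
        rw [← hπ]; exact hFp
      have hB2 : ((p ^ j : ℕ) : ℤ) ∣ x - ((x1 % p ^ j : ℕ) : ℤ) := by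
        have hB3 : ((p ^ j : ℕ) : ℤ) ∣ x - (x1 : ℤ) :=
          (Int.natCast_dvd_natCast.mpr (pow_dvd_pow p h1)).trans hxx1
        have hB4 : ((p ^ j : ℕ) : ℤ) ∣ (x1 : ℤ) - ((x1 % p ^ j : ℕ) : ℤ) := by
          have hn : p ^ j ∣ x1 - x1 % p ^ j := Nat.dvd_sub_mod x1
          have := Int.natCast_dvd_natCast.mpr hn
          rwa [Nat.cast_sub (Nat.mod_le _ _)] at this
        have := dvd_add hB3 hB4
        simpa using this
      have := dvd_sub hB2 hB1
      simpa using this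
    refine ⟨F b, Finset.mem_image_of_mem F hb, ?_⟩
    have hcopZ : IsCoprime ((p ^ j : ℕ) : ℤ) ((d0 : ℕ) : ℤ) :=
      Nat.isCoprime_iff_coprime.mpr ((hp.coprime_iff_not_dvd.mpr h5).pow_left _)
    have hmul : (((F b).2 : ℕ) : ℤ) = ((p ^ j : ℕ) : ℤ) * ((d0 : ℕ) : ℤ) := by
      have h7 : φ b.2 = p ^ j * d0 := rfl
      rw [hFsnd, h7]
      push_cast
      ring
    rw [hmul]
    exact hcopZ.mul_dvd hpjx hd0x
  · -- distinct moduli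
    intro c1 hc1 c2 hc2 heq
    rw [Finset.mem_image] at hc1 hc2
    obtain ⟨b1, hb1, rfl⟩ := hc1
    obtain ⟨b2, hb2, rfl⟩ := hc2
    rw [hFsnd, hFsnd] at heq
    have hbeq : b1 = b2 :=
      hCdist b1 hb1 b2 hb2 (hinj b1.2 (hmem b1 hb1).1 b2.2 (hmem b2 hb2).1 heq)
    rw [hbeq]
  · -- image of moduli
    rw [Finset.image_image]
    have hcomp : (Prod.snd ∘ F) = φ ∘ Prod.snd := rfl
    rw [hcomp, ← Finset.image_image, hCmod, hL']
    ext d'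
    simp only [Finset.mem_image, Finset.mem_filter, Nat.mem_divisors]
    constructor
    · rintro ⟨d, ⟨⟨hdL, -⟩, hmd⟩, rfl⟩
      obtain ⟨hA, hB⟩ := hforward d hdL hmd
      exact ⟨⟨hA, mul_ne_zero (pow_ne_zero _ hp.pos.ne') hM0⟩, hB⟩
    · rintro ⟨⟨hd', -⟩, hmd'⟩
      obtain ⟨d, hdL, hmd, hφd⟩ := hsurj d' hd' hmd'
      exact ⟨d, ⟨⟨hdL, hL0⟩, hmd⟩, hφd⟩
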